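/- Let A be a commutative monoid with zero and let p be a prime ideal of A (a subset with pA ⊆ p and 0 ∈ p whose complement is multiplicatively closed). Let G denote the quotient group of the commutative cancellative image of the monoid A∖p (i.e. the group of fractions of A/p minus zero). Then the prime congruences E on A with zero class [0]_E = p are in natural bijection with the subgroups H of G, via: x ∼_E 0 iff x ∈ p, and for x, y ∉ p, x ∼_E y iff the element x⁻¹y of G lies in H. -/

import Mathlib

/-- A congruence `E` on a commutative monoid with zero is prime if `1 ≁ 0` and
`a·f ∼ b·f` implies `a ∼ b` or `f ∼ 0`. -/
def IsPrimeCon {A : Type*} [CommMonoidWithZero A] (E : Con A) : Prop :=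
  ¬ E 1 0 ∧ ∀ a b f : A, E (a * f) (b * f) → E a b ∨ E f 0

/-- The complement `A ∖ p` of a prime ideal `p`, as a submonoid of `A`. -/
def primeComplement {A : Type*} [CommMonoidWithZero A] (p : Set A)
    (h1 : (1 : A) ∉ p) (hmul : ∀ x y : A, x ∉ p → y ∉ p → x * y ∉ p) :
    Submonoid A where
  carrier := {x | x ∉ p}
  one_mem' := h1
  mul_mem' := fun hx hy => hmul _ _ hx hy

/-- The group of fractions of (the cancellative image of) the monoid `A ∖ p`:
the localization of `A ∖ p` at all of its elements. -/
def fracGroup {A : Type*} [CommMonoidWithZero A] (p : Set A)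
    (h1 : (1 : A) ∉ p) (hmul : ∀ x y : A, x ∉ p → y ∉ p → x * y ∉ p) : Type _ :=
  Localization (⊤ : Submonoid (primeComplement p h1 hmul))

instance {A : Type*} [CommMonoidWithZero A] (p : Set A)
    (h1 : (1 : A) ∉ p) (hmul : ∀ x y : A, x ∉ p → y ∉ p → x * y ∉ p) :
    CommMonoid (fracGroup p h1 hmul) :=
  inferInstanceAs (CommMonoid (Localization _))

/-- Since every element of the group of fractions is invertible, its subgroups are the
same as its inverse-closed submonoids. -/
def IsSubgroupLike {G : Type*} [CommMonoid G] (H : Submonoid G) : Prop :=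
  ∀ g ∈ H, ∀ g' : G, g * g' = 1 → g' ∈ H

/-- The element `x⁻¹·y` of the group of fractions, for `x, y ∉ p`. -/
def fracMk {A : Type*} [CommMonoidWithZero A] (p : Set A)
    (h1 : (1 : A) ∉ p) (hmul : ∀ x y : A, x ∉ p → y ∉ p → x * y ∉ p)
    {x y : A} (hx : x ∉ p) (hy : y ∉ p) : fracGroup p h1 hmul :=
  Localization.mk (⟨y, hy⟩ : primeComplement p h1 hmul)
    ⟨⟨x, hx⟩, Submonoid.mem_top _⟩

section helpers
variable {A : Type*} [CommMonoidWithZero A] {p : Set A}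
  {h1 : (1 : A) ∉ p} {hmul : ∀ x y : A, x ∉ p → y ∉ p → x * y ∉ p}

lemma fracMk_eq_iff {x y x' y' : A} (hx : x ∉ p) (hy : y ∉ p) (hx' : x' ∉ p) (hy' : y' ∉ p) :
    fracMk p h1 hmul hx hy = fracMk p h1 hmul hx' hy' ↔
      ∃ c, c ∉ p ∧ c * (x' * y) = c * (x * y') := by
  unfold fracMk
  erw [Localization.mk_eq_mk_iff, Localization.r_iff_exists]
  constructor
  · rintro ⟨c, h⟩
    exact ⟨c.1.1, c.1.2, congrArg Subtype.val h⟩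
  · rintro ⟨c, hc, h⟩
    exact ⟨⟨⟨c, hc⟩, Submonoid.mem_top _⟩, Subtype.ext h⟩

lemma fracMk_mul {x y x' y' : A} (hx : x ∉ p) (hy : y ∉ p) (hx' : x' ∉ p) (hy' : y' ∉ p) :
    fracMk p h1 hmul hx hy * fracMk p h1 hmul hx' hy' =
      fracMk p h1 hmul (hmul _ _ hx hx') (hmul _ _ hy hy') :=
  Localization.mk_mul _ _ _ _

lemma fracMk_self {x : A} (hx : x ∉ p) : fracMk p h1 hmul hx hx = 1 :=
  Localization.mk_self (⟨⟨x, hx⟩, Submonoid.mem_top _⟩ : (⊤ : Submonoid (primeComplement p h1 hmul)))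

lemma fracMk_surj (g : fracGroup p h1 hmul) :
    ∃ (x y : A) (hx : x ∉ p) (hy : y ∉ p), g = fracMk p h1 hmul hx hy := by
  induction g using Localization.ind with
  | _ a =>
    obtain ⟨⟨y, hy⟩, ⟨⟨x, hx⟩, -⟩⟩ := a
    exact ⟨x, y, hx, hy, rfl⟩

end helpers

section helpers2
variable {A : Type*} [CommMonoidWithZero A] {p : Set A}
  {h1 : (1 : A) ∉ p} {hmul : ∀ x y : A, x ∉ p → y ∉ p → x * y ∉ p}

lemma fracMk_eq_of {x y x' y' : A} (hx : x ∉ p) (hy : y ∉ p) (hx' : x' ∉ p) (hy' : y' ∉ p)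
    (h : x' * y = x * y') : fracMk p h1 hmul hx hy = fracMk p h1 hmul hx' hy' :=
  (fracMk_eq_iff hx hy hx' hy').2 ⟨1, h1, by rw [h]⟩

lemma fracMk_mul_inv {a b : A} (ha : a ∉ p) (hb : b ∉ p) :
    fracMk p h1 hmul ha hb * fracMk p h1 hmul hb ha = 1 := by
  rw [fracMk_mul, ← fracMk_self (hmul _ _ ha hb)]
  exact fracMk_eq_of _ _ _ _ (by rw [mul_comm b a])

lemma fracMk_trans {a b c : A} (ha : a ∉ p) (hb : b ∉ p) (hc : c ∉ p) :
    fracMk p h1 hmul ha hb * fracMk p h1 hmul hb hc = fracMk p h1 hmul ha hc := by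
  rw [fracMk_mul]
  exact fracMk_eq_of _ _ _ _ (by rw [mul_assoc])

end helpers2


/-- The prime congruences on `A` with zero class `p` are in natural bijection with the
subgroups `H` of the group of fractions `G` of `A ∖ p`, via:
`x ∼ 0 ↔ x ∈ p`, and for `x, y ∉ p`, `x ∼ y ↔ x⁻¹y ∈ H`. -/
theorem primeCon_fiber_eq_subgroups {A : Type*} [CommMonoidWithZero A] (p : Set A)
    (h0 : (0 : A) ∈ p) (h1 : (1 : A) ∉ p)
    (habs : ∀ a ∈ p, ∀ x : A, a * x ∈ p)
    (hmul : ∀ x y : A, x ∉ p → y ∉ p → x * y ∉ p) :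
    (∀ E : Con A, IsPrimeCon E → {x : A | E x 0} = p →
      ∃! H : Submonoid (fracGroup p h1 hmul), IsSubgroupLike H ∧
        ∀ (x y : A) (hx : x ∉ p) (hy : y ∉ p),
          E x y ↔ fracMk p h1 hmul hx hy ∈ H) ∧
    (∀ H : Submonoid (fracGroup p h1 hmul), IsSubgroupLike H →
      ∃! E : Con A, IsPrimeCon E ∧ {x : A | E x 0} = p ∧
        ∀ (x y : A) (hx : x ∉ p) (hy : y ∉ p),
          E x y ↔ fracMk p h1 hmul hx hy ∈ H) := by
  constructor
  · -- From a prime congruence to a subgroup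
    intro E hE hzero
    have hz : ∀ x : A, E x 0 ↔ x ∈ p := fun x => by
      constructor
      · intro h; rw [← hzero]; exact h
      · intro h; rw [← hzero] at h; exact h
    -- key: transport E along equality of fractions
    have key : ∀ {x y x' y' : A} (hx : x ∉ p) (hy : y ∉ p) (hx' : x' ∉ p) (hy' : y' ∉ p),
        E x' y' → fracMk p h1 hmul hx hy = fracMk p h1 hmul hx' hy' → E x y := by
      intro x y x' y' hx hy hx' hy' hxy' heq
      obtain ⟨c, hc, hceq⟩ := (fracMk_eq_iff hx hy hx' hy').1 heq
      have hL : x' * (c * y) = x * (c * y') := by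
        rw [mul_left_comm, hceq, mul_left_comm]
      have hR : y' * (c * y) = y * (c * y') := by
        rw [mul_left_comm, mul_comm y' y, mul_left_comm]
      have e2 : E (x * (c * y')) (y * (c * y')) := by
        rw [← hL, ← hR]; exact E.mul hxy' (E.refl _)
      rcases hE.2 x y (c * y') e2 with h | h
      · exact h
      · exact absurd ((hz _).1 h) (hmul c y' hc hy')
    refine ⟨{ carrier := {g | ∃ (x y : A) (hx : x ∉ p) (hy : y ∉ p),
                E x y ∧ fracMk p h1 hmul hx hy = g}
              one_mem' := ⟨1, 1, h1, h1, E.refl 1, fracMk_self h1⟩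
              mul_mem' := ?_ }, ⟨?_, ?_⟩, ?_⟩
    · rintro g g' ⟨x, y, hx, hy, hxy, rfl⟩ ⟨x', y', hx', hy', hxy', rfl⟩
      exact ⟨x * x', y * y', hmul _ _ hx hx', hmul _ _ hy hy', E.mul hxy hxy',
        (fracMk_mul hx hy hx' hy').symm⟩
    · -- subgroup-like
      rintro g ⟨x, y, hx, hy, hxy, rfl⟩ g' hgg'
      obtain ⟨a, b, ha, hb, rfl⟩ := fracMk_surj g'
      rw [fracMk_mul, ← fracMk_self h1] at hgg'
      obtain ⟨c, hc, hceq⟩ := (fracMk_eq_iff _ _ _ _).1 hgg'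
      -- hceq : c * (1 * (y * b)) = c * (x * a * 1)
      rw [one_mul, mul_one] at hceq
      have hL : x * (c * b) = b * (c * x) := by
        rw [mul_left_comm, mul_left_comm b c x, mul_comm x b]
      have hR : y * (c * b) = a * (c * x) := by
        rw [mul_left_comm, hceq, mul_comm x a, mul_left_comm]
      have e2 : E (b * (c * x)) (a * (c * x)) := by
        rw [← hL, ← hR]; exact E.mul hxy (E.refl _)
      rcases hE.2 b a (c * x) e2 with h | h
      · exact ⟨a, b, ha, hb, E.symm h, rfl⟩
      · exact absurd ((hz _).1 h) (hmul c x hc hx)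
    · -- the iff
      intro x y hx hy
      constructor
      · intro h; exact ⟨x, y, hx, hy, h, rfl⟩
      · rintro ⟨x', y', hx', hy', hxy', heq⟩
        exact key hx hy hx' hy' hxy' heq.symm
    · -- uniqueness
      rintro H' ⟨hsub', hiff'⟩
      ext g
      obtain ⟨x, y, hx, hy, rfl⟩ := fracMk_surj g
      constructor
      · intro h; exact ⟨x, y, hx, hy, (hiff' x y hx hy).2 h, rfl⟩
      · rintro ⟨x', y', hx', hy', hxy', heq⟩
        exact (hiff' x y hx hy).1 (key hx hy hx' hy' hxy' heq.symm)
  · -- From a subgroup to a prime congruence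
    intro H hH
    set E : Con A :=
      { r := fun a b => (a ∈ p ∧ b ∈ p) ∨
          ∃ (ha : a ∉ p) (hb : b ∉ p), fracMk p h1 hmul ha hb ∈ H
        iseqv := by
          refine ⟨fun a => ?_, ?_, ?_⟩
          · by_cases ha : a ∈ p
            · exact Or.inl ⟨ha, ha⟩
            · exact Or.inr ⟨ha, ha, by rw [fracMk_self]; exact H.one_mem⟩
          · rintro a b (⟨ha, hb⟩ | ⟨ha, hb, hab⟩)
            · exact Or.inl ⟨hb, ha⟩
            · exact Or.inr ⟨hb, ha, hH _ hab _ (fracMk_mul_inv ha hb)⟩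
          · rintro a b c (⟨ha, hb⟩ | ⟨ha, hb, hab⟩) (⟨hb', hc⟩ | ⟨hb', hc, hbc⟩)
            · exact Or.inl ⟨ha, hc⟩
            · exact absurd hb hb'
            · exact absurd hb' hb
            · refine Or.inr ⟨ha, hc, ?_⟩
              rw [← fracMk_trans ha hb hc]
              exact H.mul_mem hab hbc
        mul' := by
          rintro a b c d (⟨ha, hb⟩ | ⟨ha, hb, hab⟩) (⟨hc, hd⟩ | ⟨hc, hd, hcd⟩)
          · exact Or.inl ⟨habs _ ha _, habs _ hb _⟩
          · exact Or.inl ⟨habs _ ha _, habs _ hb _⟩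
          · exact Or.inl ⟨by rw [mul_comm]; exact habs _ hc _,
              by rw [mul_comm]; exact habs _ hd _⟩
          · refine Or.inr ⟨hmul _ _ ha hc, hmul _ _ hb hd, ?_⟩
            rw [← fracMk_mul ha hb hc hd]
            exact H.mul_mem hab hcd }
    have hE : ∀ a b : A, E a b ↔ ((a ∈ p ∧ b ∈ p) ∨
        ∃ (ha : a ∉ p) (hb : b ∉ p), fracMk p h1 hmul ha hb ∈ H) := fun a b => Iff.rfl
    have hEzero : ∀ f : A, E f 0 ↔ f ∈ p := by
      intro f
      rw [hE]
      constructor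
      · rintro (⟨hf, -⟩ | ⟨-, h0', -⟩)
        · exact hf
        · exact absurd h0 h0'
      · intro hf; exact Or.inl ⟨hf, h0⟩
    have hprime : IsPrimeCon E := by
      constructor
      · intro h
        rcases (hE 1 0).1 h with ⟨hh, -⟩ | ⟨-, h0', -⟩
        · exact h1 hh
        · exact h0' h0
      · intro a b f hab
        by_cases hf : f ∈ p
        · exact Or.inr ((hEzero f).2 hf)
        rcases (hE _ _).1 hab with ⟨haf, hbf⟩ | ⟨haf, hbf, hmem⟩
        · left
          refine Or.inl ⟨?_, ?_⟩
          · by_contra ha; exact hmul _ _ ha hf haf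
          · by_contra hb; exact hmul _ _ hb hf hbf
        · left
          have ha : a ∉ p := fun ha => haf (habs _ ha _)
          have hb : b ∉ p := fun hb => hbf (habs _ hb _)
          refine Or.inr ⟨ha, hb, ?_⟩
          have : fracMk p h1 hmul ha hb = fracMk p h1 hmul haf hbf :=
            fracMk_eq_of _ _ _ _ (by rw [mul_assoc, mul_comm f b])
          rw [this]; exact hmem
    refine ⟨E, ⟨hprime, ?_, ?_⟩, ?_⟩
    · ext f; exact hEzero f
    · intro x y hx hy
      constructor
      · rintro (⟨hxp, -⟩ | ⟨hx', hy', hmem⟩)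
        · exact absurd hxp hx
        · exact hmem
      · intro h; exact Or.inr ⟨hx, hy, h⟩
    · -- uniqueness
      rintro E' ⟨hE', hzero', hiff'⟩
      have hz' : ∀ x : A, E' x 0 ↔ x ∈ p := fun x => by
        constructor
        · intro h; rw [← hzero']; exact h
        · intro h; rw [← hzero'] at h; exact h
      ext a b
      by_cases ha : a ∈ p <;> by_cases hb : b ∈ p
      · constructor
        · intro _; exact Or.inl ⟨ha, hb⟩
        · intro _; exact E'.trans ((hz' a).2 ha) (E'.symm ((hz' b).2 hb))
      · constructor
        · intro h
          exact absurd ((hz' b).1 (E'.trans (E'.symm h) ((hz' a).2 ha))) hb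
        · rintro (⟨-, hbp⟩ | ⟨ha', -, -⟩)
          · exact absurd hbp hb
          · exact absurd ha ha'
      · constructor
        · intro h
          exact absurd ((hz' a).1 (E'.trans h ((hz' b).2 hb))) ha
        · rintro (⟨hap, -⟩ | ⟨-, hb', -⟩)
          · exact absurd hap ha
          · exact absurd hb hb'
      · rw [hiff' a b ha hb]
        constructor
        · intro h; exact Or.inr ⟨ha, hb, h⟩
        · rintro (⟨hap, -⟩ | ⟨ha', hb', hmem⟩)
          · exact absurd hap ha
          · exact hmem
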